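/- For every n ≥ 1 and every natural number l, there exists a D3-directing complete NFA with n states (and some finite alphabet) whose shortest D3-directing word has length l if and only if there exists a synchronizing DFA with n states (and some finite alphabet) whose shortest synchronizing word has length l. In particular, the maximum of d₃ over D3-directing complete NFAs with n states equals the maximum synchronization length d(n) over synchronizing DFAs with n states. -/
import Mathlib

/-- Action of an NFA transition function on a subset of states along a word. -/
def nfaRun {n m : ℕ} (δ : Fin n → Fin m → Finset (Fin n)) :
    Finset (Fin n) → List (Fin m) → Finset (Fin n)
  | S, [] => S
  | S, a :: w => nfaRun δ (S.biUnion fun q => δ q a) w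

/-- The word `w` is D3-directing for the NFA `δ`:
the intersection `⋂_{q ∈ Q} q·w` is nonempty. -/
def nfaD3word {n m : ℕ} (δ : Fin n → Fin m → Finset (Fin n)) (w : List (Fin m)) : Prop :=
  ∃ r : Fin n, ∀ q : Fin n, r ∈ nfaRun δ {q} w

/-- Action of a DFA transition function on a subset of states along a word. -/
def dfaRun {n m : ℕ} (δ : Fin n → Fin m → Fin n) :
    Finset (Fin n) → List (Fin m) → Finset (Fin n)
  | S, [] => S
  | S, a :: w => dfaRun δ (S.image fun q => δ q a) w

/-- A word `w` synchronizes the subset `S` in the DFA `δ`. -/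
def dfaSync {n m : ℕ} (δ : Fin n → Fin m → Fin n) (S : Finset (Fin n))
    (w : List (Fin m)) : Prop :=
  (dfaRun δ S w).card = 1

lemma nfaRun_biUnion {n m : ℕ} (δ : Fin n → Fin m → Finset (Fin n)) (w : List (Fin m)) :
    ∀ S, nfaRun δ S w = S.biUnion (fun p => nfaRun δ {p} w) := by
  induction w with
  | nil => intro S; simp [nfaRun]
  | cons a w ih =>
    intro S
    simp only [nfaRun]
    rw [ih]
    have h2 : ∀ p : Fin n, nfaRun δ (Finset.biUnion {p} fun q => δ q a) w
        = (Finset.biUnion {p} fun q => δ q a).biUnion (fun s => nfaRun δ {s} w) := fun p => ih _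
    simp only [h2]
    ext x
    simp
    tauto

lemma nfaRun_mono {n m : ℕ} (δ : Fin n → Fin m → Finset (Fin n)) (w : List (Fin m))
    {S T : Finset (Fin n)} (h : S ⊆ T) : nfaRun δ S w ⊆ nfaRun δ T w := by
  rw [nfaRun_biUnion, nfaRun_biUnion]
  exact Finset.biUnion_subset_biUnion_of_subset_left _ h

lemma dfaRun_eq_image {n m : ℕ} (δ : Fin n → Fin m → Fin n) (w : List (Fin m)) :
    ∀ S, dfaRun δ S w = S.image (fun q => w.foldl δ q) := by
  induction w with
  | nil => intro S; simp [dfaRun]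
  | cons a w ih =>
    intro S
    simp only [dfaRun, List.foldl_cons, ih, Finset.image_image]
    rfl

lemma dfaRun_singleton {n m : ℕ} (δ : Fin n → Fin m → Fin n) (w : List (Fin m)) (q : Fin n) :
    dfaRun δ {q} w = {w.foldl δ q} := by
  rw [dfaRun_eq_image]; simp

lemma dfaRun_mono {n m : ℕ} (δ : Fin n → Fin m → Fin n) (w : List (Fin m))
    {S T : Finset (Fin n)} (h : S ⊆ T) : dfaRun δ S w ⊆ dfaRun δ T w := by
  rw [dfaRun_eq_image, dfaRun_eq_image]
  exact Finset.image_subset_image h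

lemma dfa_le_nfa {n m m' : ℕ} (δ : Fin n → Fin m → Finset (Fin n)) (δ' : Fin n → Fin m' → Fin n)
    (g : Fin m' → Fin m) (hg : ∀ q b, δ' q b ∈ δ q (g b)) (u : List (Fin m')) :
    ∀ S, dfaRun δ' S u ⊆ nfaRun δ S (u.map g) := by
  induction u with
  | nil => intro S; simp [dfaRun, nfaRun]
  | cons a u ih =>
    intro S
    simp only [dfaRun, List.map, nfaRun]
    refine (ih _).trans (nfaRun_mono _ _ ?_)
    intro x hx
    simp only [Finset.mem_image] at hx
    obtain ⟨q, hq, rfl⟩ := hx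
    exact Finset.mem_biUnion.mpr ⟨q, hq, hg q a⟩

lemma nfaRun_of_dfa {n m : ℕ} (δ : Fin n → Fin m → Fin n) (w : List (Fin m)) :
    ∀ S, nfaRun (fun q a => ({δ q a} : Finset (Fin n))) S w = dfaRun δ S w := by
  induction w with
  | nil => intro S; simp [nfaRun, dfaRun]
  | cons a w ih =>
    intro S
    simp only [nfaRun, dfaRun]
    rw [← ih]
    congr 1
    ext x
    simp [eq_comm]

theorem stmt17 (n : ℕ) (hn : 1 ≤ n) :
    (∀ l : ℕ,
      (∃ (m : ℕ) (δ : Fin n → Fin m → Finset (Fin n)),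
        (∀ q a, (δ q a).Nonempty) ∧
        (∃ w, nfaD3word δ w ∧ w.length = l) ∧ ∀ w, nfaD3word δ w → l ≤ w.length) ↔
      (∃ (m : ℕ) (δ : Fin n → Fin m → Fin n),
        (∃ w, dfaSync δ Finset.univ w ∧ w.length = l) ∧
          ∀ w, dfaSync δ Finset.univ w → l ≤ w.length)) ∧
    -- in particular, the maximum of d₃ over D3-directing complete NFAs with n states
    -- equals the maximum synchronization length d(n) over synchronizing DFAs with n states
    sSup {l : ℕ | ∃ (m : ℕ) (δ : Fin n → Fin m → Finset (Fin n)),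
        (∀ q a, (δ q a).Nonempty) ∧
        (∃ w, nfaD3word δ w ∧ w.length = l) ∧ ∀ w, nfaD3word δ w → l ≤ w.length} =
      sSup {l : ℕ | ∃ (m : ℕ) (δ : Fin n → Fin m → Fin n),
        (∃ w, dfaSync δ Finset.univ w ∧ w.length = l) ∧
          ∀ w, dfaSync δ Finset.univ w → l ≤ w.length} := by
  classical
  have hune : (Finset.univ : Finset (Fin n)).Nonempty := ⟨⟨0, hn⟩, Finset.mem_univ _⟩
  have main : ∀ l : ℕ,
      (∃ (m : ℕ) (δ : Fin n → Fin m → Finset (Fin n)),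
        (∀ q a, (δ q a).Nonempty) ∧
        (∃ w, nfaD3word δ w ∧ w.length = l) ∧ ∀ w, nfaD3word δ w → l ≤ w.length) ↔
      (∃ (m : ℕ) (δ : Fin n → Fin m → Fin n),
        (∃ w, dfaSync δ Finset.univ w ∧ w.length = l) ∧
          ∀ w, dfaSync δ Finset.univ w → l ≤ w.length) := by
    intro l
    constructor
    · rintro ⟨m, δ, hδ, ⟨w, ⟨r, hr⟩, hwl⟩, hmin⟩
      subst hwl
      set R : ℕ → Finset (Fin n) :=
        fun i => Finset.univ.filter (fun p => r ∈ nfaRun δ {p} (w.drop i)) with hR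
      have hR0 : ∀ p, p ∈ R 0 := by
        intro p
        simp only [hR, Finset.mem_filter, Finset.mem_univ, true_and, List.drop_zero]
        exact hr p
      have hRlen : R w.length = {r} := by
        ext p
        simp only [hR, Finset.mem_filter, Finset.mem_univ, true_and, List.drop_length,
          Finset.mem_singleton]
        simp [nfaRun, eq_comm]
      have hstep : ∀ (i : Fin w.length) (p : Fin n), p ∈ R i.val →
          ((δ p (w.get i)) ∩ R (i.val + 1)).Nonempty := by
        intro i p hp
        simp only [hR, Finset.mem_filter, Finset.mem_univ, true_and] at hp
        rw [List.drop_eq_getElem_cons i.isLt] at hp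
        simp only [nfaRun] at hp
        rw [nfaRun_biUnion] at hp
        simp only [Finset.mem_biUnion, Finset.singleton_biUnion] at hp
        obtain ⟨s, hs1, hs2⟩ := hp
        refine ⟨s, Finset.mem_inter.mpr ⟨?_, ?_⟩⟩
        · simpa [List.get_eq_getElem] using hs1
        · simp only [hR, Finset.mem_filter, Finset.mem_univ, true_and]
          exact hs2
      set δ' : Fin n → Fin w.length → Fin n := fun p i =>
        if h : ((δ p (w.get i)) ∩ R (i.val + 1)).Nonempty then h.choose
        else (hδ p (w.get i)).choose with hδ'
      have hg : ∀ p i, δ' p i ∈ δ p (w.get i) := by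
        intro p i
        simp only [hδ']
        split
        · rename_i h
          exact (Finset.mem_inter.mp h.choose_spec).1
        · exact (hδ p (w.get i)).choose_spec
      have hB : ∀ (i : Fin w.length) (p : Fin n), p ∈ R i.val → δ' p i ∈ R (i.val + 1) := by
        intro i p hp
        have h := hstep i p hp
        simp only [hδ', dif_pos h]
        exact (Finset.mem_inter.mp h.choose_spec).2
      refine ⟨w.length, δ', ⟨List.finRange w.length, ?_, by simp⟩, ?_⟩
      · have aux : ∀ (k j : ℕ), j + k = w.length → ∀ S : Finset (Fin n), S ⊆ R j →
            dfaRun δ' S ((List.finRange w.length).drop j) ⊆ R w.length := by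
          intro k
          induction k with
          | zero =>
            intro j hj S hS
            have hd : (List.finRange w.length).drop j = [] := by
              apply List.drop_eq_nil_of_le
              simp
              omega
            rw [hd]
            simpa [dfaRun, ← hj] using hS
          | succ k ih =>
            intro j hj S hS
            have hjlt : j < w.length := by omega
            have hjlt' : j < (List.finRange w.length).length := by simpa using hjlt
            rw [List.drop_eq_getElem_cons hjlt']
            simp only [dfaRun]
            have hget : (List.finRange w.length)[j]'hjlt' = ⟨j, hjlt⟩ := by
              simp
            rw [hget]
            apply ih (j + 1) (by omega)
            intro x hx
            simp only [Finset.mem_image] at hx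
            obtain ⟨p, hp, rfl⟩ := hx
            exact hB ⟨j, hjlt⟩ p (hS hp)
        have hsub := aux w.length 0 (by omega) Finset.univ (fun p _ => hR0 p)
        rw [List.drop_zero, hRlen] at hsub
        have hne' : (dfaRun δ' Finset.univ (List.finRange w.length)).Nonempty := by
          rw [dfaRun_eq_image]
          exact hune.image _
        unfold dfaSync
        rw [Finset.card_eq_one]
        refine ⟨r, ?_⟩
        rcases Finset.subset_singleton_iff.mp hsub with h | h
        · exact absurd h (Finset.nonempty_iff_ne_empty.mp hne')
        · exact h
      · intro u hu
        obtain ⟨r', hr'⟩ := Finset.card_eq_one.mp hu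
        have hd3 : nfaD3word δ (u.map (fun i => w.get i)) := by
          refine ⟨r', fun q => ?_⟩
          have h1 : dfaRun δ' {q} u ⊆ dfaRun δ' Finset.univ u :=
            dfaRun_mono _ _ (Finset.subset_univ _)
          rw [hr', dfaRun_singleton] at h1
          have h2 : u.foldl δ' q = r' := by
            have := h1 (Finset.mem_singleton_self _)
            simpa using this
          have h3 := dfa_le_nfa δ δ' (fun i => w.get i) hg u {q}
          have h4 : r' ∈ dfaRun δ' {q} u := by
            rw [dfaRun_singleton, h2]
            exact Finset.mem_singleton_self _
          exact h3 h4
        have := hmin _ hd3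
        simpa using this
    · rintro ⟨m, δ, ⟨w, hw, hwl⟩, hmin⟩
      refine ⟨m, fun q a => ({δ q a} : Finset (Fin n)), fun q a => ⟨_, Finset.mem_singleton_self _⟩,
        ⟨w, ?_, hwl⟩, ?_⟩
      · obtain ⟨r', hr'⟩ := Finset.card_eq_one.mp hw
        refine ⟨r', fun q => ?_⟩
        rw [nfaRun_of_dfa]
        have h1 : dfaRun δ {q} w ⊆ dfaRun δ Finset.univ w :=
          dfaRun_mono _ _ (Finset.subset_univ _)
        rw [hr', dfaRun_singleton] at h1
        rw [dfaRun_singleton]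
        have h2 : w.foldl δ q = r' := by
          have := h1 (Finset.mem_singleton_self _)
          simpa using this
        rw [h2]
        exact Finset.mem_singleton_self _
      · intro u hu
        obtain ⟨r, hr⟩ := hu
        apply hmin
        unfold dfaSync
        rw [Finset.card_eq_one]
        refine ⟨r, ?_⟩
        have hfold : ∀ q : Fin n, u.foldl δ q = r := by
          intro q
          have := hr q
          rw [nfaRun_of_dfa, dfaRun_singleton] at this
          simpa [eq_comm] using this
        rw [dfaRun_eq_image]
        ext x
        simp only [Finset.mem_image, Finset.mem_univ, true_and, Finset.mem_singleton]
        constructor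
        · rintro ⟨q, rfl⟩; exact hfold q
        · rintro rfl; exact ⟨⟨0, hn⟩, hfold _⟩
  refine ⟨main, ?_⟩
  congr 1
  ext l
  exact main l
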